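/- Let S ⊂ Z be a finite step set with max S = a, and let A^{(k)} be the (k+1)×(k+1) matrix with entry (i,j) equal to ω_{j-i} if j - i ∈ S and 0 otherwise, for 0 ≤ i,j ≤ k. Then the generating function E^{(k)} of excursions of height at most k equals F_k / F_{k+1}, where F_{k+1} = det(I - t A^{(k)}) and F_0 = 1. -/

import Mathlib

open scoped Classical

/-- Partial sum of the first `m` steps of a walk `f : Fin n → ℤ`. -/
def psum {n : ℕ} (f : Fin n → ℤ) (m : ℕ) : ℤ :=
  ∑ i ∈ Finset.univ.filter (fun i : Fin n => (i : ℕ) < m), f i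

/-- Walks of length `n` with steps in `S` whose partial sums all lie in `[0, k]`. -/
noncomputable def bddWalkSet (S : Finset ℤ) (k n : ℕ) : Finset (Fin n → ℤ) :=
  (Fintype.piFinset fun _ : Fin n => S).filter fun f =>
    ∀ m : ℕ, 0 ≤ psum f m ∧ psum f m ≤ (k : ℤ)

/-- `E⁽ᵏ⁾`: the weighted generating function of excursions of height at most `k`. -/
noncomputable def bddExcursionGFW {K : Type*} [Field K] (S : Finset ℤ) (ω : ℤ → K)
    (k : ℕ) : PowerSeries K :=
  PowerSeries.mk fun n =>
    ∑ f ∈ (bddWalkSet S k n).filter (fun f => psum f n = 0), ∏ i, ω (f i)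

/-- The transfer matrix `A⁽ᵏ⁾` on levels `0, …, k`. -/
def transferMatrix {K : Type*} [Field K] (S : Finset ℤ) (ω : ℤ → K) (k : ℕ) :
    Matrix (Fin (k + 1)) (Fin (k + 1)) K :=
  Matrix.of fun i j => if ((j : ℤ) - (i : ℤ)) ∈ S then ω ((j : ℤ) - (i : ℤ)) else 0

/-- `F₀ = 1` and `F_{m+1} = det(1 - t A⁽ᵐ⁾)`. -/
noncomputable def Fdet {K : Type*} [Field K] (S : Finset ℤ) (ω : ℤ → K) :
    ℕ → PowerSeries K
  | 0 => 1
  | m + 1 =>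
      Matrix.det
        ((1 : Matrix (Fin (m + 1)) (Fin (m + 1)) (PowerSeries K)) -
          Matrix.of fun i j => PowerSeries.X * PowerSeries.C (transferMatrix S ω m i j))

lemma psum_eq_sum_ite {n : ℕ} (f : Fin n → ℤ) (m : ℕ) :
    psum f m = ∑ i : Fin n, if (i : ℕ) < m then f i else 0 := by
  rw [psum, Finset.sum_filter]

lemma psum_zero {n : ℕ} (f : Fin n → ℤ) : psum f 0 = 0 := by
  simp [psum_eq_sum_ite]

lemma psum_cons_succ {n : ℕ} (s : ℤ) (g : Fin n → ℤ) (m : ℕ) :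
    psum (Fin.cons s g) (m + 1) = s + psum g m := by
  simp only [psum_eq_sum_ite]
  rw [Fin.sum_univ_succ]
  simp

lemma sum_piFinset_cons {M : Type*} [AddCommMonoid M] (S : Finset ℤ) (n : ℕ)
    (F : (Fin (n+1) → ℤ) → M) :
    ∑ f ∈ Fintype.piFinset (fun _ : Fin (n+1) => S), F f
      = ∑ s ∈ S, ∑ g ∈ Fintype.piFinset (fun _ : Fin n => S), F (Fin.cons s g) := by
  rw [← Finset.sum_product']
  refine Finset.sum_bij' (fun f _ => ((f 0 : ℤ), Fin.tail f)) (fun p _ => Fin.cons p.1 p.2)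
    ?_ ?_ ?_ ?_ ?_
  · intro f hf
    simp only [Fintype.mem_piFinset] at hf
    simp only [Finset.mem_product, Fintype.mem_piFinset]
    exact ⟨hf 0, fun j => hf j.succ⟩
  · intro p hp
    simp only [Finset.mem_product, Fintype.mem_piFinset] at hp ⊢
    intro i
    refine Fin.cases ?_ ?_ i
    · simpa using hp.1
    · intro j; simpa [Fin.tail] using hp.2 j
  · intro f hf
    exact Fin.cons_self_tail f
  · intro p hp
    simp
  · intro f hf
    rw [Fin.cons_self_tail]

lemma walk_count {K : Type*} [Field K] (S : Finset ℤ) (ω : ℤ → K) (k : ℕ) :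
    ∀ (n : ℕ) (i j : Fin (k+1)),
    ((transferMatrix S ω k) ^ n) i j
      = ∑ f ∈ (Fintype.piFinset fun _ : Fin n => S).filter
          (fun f => (∀ m, 0 ≤ (i:ℤ) + psum f m ∧ (i:ℤ) + psum f m ≤ (k:ℤ)) ∧
            (i:ℤ) + psum f n = (j:ℤ)),
        ∏ t, ω (f t) := by
  intro n
  induction n with
  | zero =>
    intro i j
    have hU : (Fintype.piFinset fun _ : Fin 0 => S) = Finset.univ := by
      apply Finset.eq_univ_iff_forall.2; intro f
      simp only [Fintype.mem_piFinset]
      exact fun i => i.elim0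
    rw [pow_zero, hU, Finset.sum_filter, Fintype.sum_unique, Matrix.one_apply]
    have h0 : ∀ (f : Fin 0 → ℤ) (m : ℕ), psum f m = 0 := by
      intro f m; simp [psum]
    simp only [h0, add_zero]
    have hik : (0:ℤ) ≤ (i:ℤ) ∧ (i:ℤ) ≤ (k:ℤ) :=
      ⟨Int.natCast_nonneg _, by exact_mod_cast Nat.lt_succ_iff.mp i.isLt⟩
    by_cases hij : i = j
    · subst hij
      rw [if_pos rfl, if_pos ⟨fun _ => hik, rfl⟩]
      simp
    · rw [if_neg hij, if_neg]
      rintro ⟨-, h2⟩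
      exact hij (Fin.ext (by exact_mod_cast h2))
  | succ n ih =>
    intro i j
    rw [pow_succ', Matrix.mul_apply]
    -- walk side
    rw [Finset.sum_filter, sum_piFinset_cons]
    -- matrix side rewrite of A i l
    have hA : ∀ l : Fin (k+1), transferMatrix S ω k i l
        = ∑ s ∈ S, if s = (l:ℤ) - (i:ℤ) then ω s else 0 := by
      intro l
      rw [Finset.sum_ite_eq' S ((l:ℤ) - (i:ℤ)) ω]
      rfl
    simp only [hA, Finset.sum_mul]
    rw [Finset.sum_comm]
    refine Finset.sum_congr rfl ?_
    intro s hs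
    -- per-step identity
    by_cases hrange : 0 ≤ (i:ℤ) + s ∧ (i:ℤ) + s ≤ (k:ℤ)
    · -- the unique landing level
      have hlt : ((i:ℤ) + s).toNat < k + 1 := by omega
      set l₀ : Fin (k+1) := ⟨((i:ℤ) + s).toNat, hlt⟩ with hl₀
      have hl₀val : (l₀:ℤ) = (i:ℤ) + s := by
        simp [hl₀, Int.toNat_of_nonneg hrange.1]
      have hcond : ∀ l : Fin (k+1), (s = (l:ℤ) - (i:ℤ)) ↔ l = l₀ := by
        intro l
        constructor
        · intro h
          apply Fin.ext
          have h2 : (l:ℤ) = (l₀:ℤ) := by omega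
          exact_mod_cast h2
        · intro h; subst h; omega
      have hL : ∑ l : Fin (k+1), (if s = (l:ℤ) - (i:ℤ) then ω s else 0)
            * (transferMatrix S ω k ^ n) l j
          = ω s * (transferMatrix S ω k ^ n) l₀ j := by
        rw [Finset.sum_eq_single l₀]
        · rw [if_pos ((hcond l₀).mpr rfl)]
        · intro l _ hne
          rw [if_neg (fun h => hne ((hcond l).mp h)), zero_mul]
        · intro h; exact absurd (Finset.mem_univ l₀) h
      rw [hL, ih l₀ j, Finset.sum_filter, Finset.mul_sum]
      refine Finset.sum_congr rfl ?_
      intro g hg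
      have hQ : ((∀ m, 0 ≤ (i:ℤ) + psum (Fin.cons s g) m ∧
              (i:ℤ) + psum (Fin.cons s g) m ≤ (k:ℤ)) ∧
            (i:ℤ) + psum (Fin.cons s g) (n+1) = (j:ℤ))
          ↔ ((∀ m, 0 ≤ (l₀:ℤ) + psum g m ∧ (l₀:ℤ) + psum g m ≤ (k:ℤ)) ∧
            (l₀:ℤ) + psum g n = (j:ℤ)) := by
        rw [hl₀val]
        constructor
        · rintro ⟨h1, h2⟩
          refine ⟨fun m => ?_, ?_⟩
          · have := h1 (m+1); rw [psum_cons_succ] at this; constructor <;> omega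
          · rw [psum_cons_succ] at h2; omega
        · rintro ⟨h1, h2⟩
          refine ⟨fun m => ?_, ?_⟩
          · cases m with
            | zero =>
              rw [psum_zero]
              have hik : (0:ℤ) ≤ (i:ℤ) ∧ (i:ℤ) ≤ (k:ℤ) := by
                constructor
                · exact_mod_cast Nat.zero_le _
                · exact_mod_cast Nat.lt_succ_iff.mp i.isLt
              omega
            | succ m => rw [psum_cons_succ]; have := h1 m; constructor <;> omega
          · rw [psum_cons_succ]; omega
      rw [mul_ite, mul_zero]
      by_cases hc : (∀ m, 0 ≤ (l₀:ℤ) + psum g m ∧ (l₀:ℤ) + psum g m ≤ (k:ℤ)) ∧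
            (l₀:ℤ) + psum g n = (j:ℤ)
      · rw [if_pos hc, if_pos (hQ.mpr hc), Fin.prod_univ_succ]
        simp
      · rw [if_neg hc, if_neg (fun h => hc (hQ.mp h))]
    · -- out of range: both sides vanish
      have hLz : ∑ l : Fin (k+1), (if s = (l:ℤ) - (i:ℤ) then ω s else 0)
            * (transferMatrix S ω k ^ n) l j = 0 := by
        apply Finset.sum_eq_zero
        intro l _
        have : ¬ (s = (l:ℤ) - (i:ℤ)) := by
          intro h
          have h0 : (0:ℤ) ≤ (l:ℤ) := by exact_mod_cast Nat.zero_le _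
          have h1 : (l:ℤ) ≤ (k:ℤ) := by exact_mod_cast Nat.lt_succ_iff.mp l.isLt
          omega
        rw [if_neg this, zero_mul]
      rw [hLz]
      symm
      apply Finset.sum_eq_zero
      intro g _
      rw [if_neg]
      rintro ⟨h1, -⟩
      have h1' := h1 1
      have hp : psum (Fin.cons s g) 1 = s := by
        have := psum_cons_succ s g 0
        simpa [psum_zero] using this
      rw [hp] at h1'
      omega

section Alg
variable {K : Type*} [Field K]

open PowerSeries

lemma geom_inverse (k : ℕ) (A : Matrix (Fin (k+1)) (Fin (k+1)) K) :
    ((1 : Matrix (Fin (k+1)) (Fin (k+1)) (PowerSeries K)) -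
        Matrix.of fun i j => PowerSeries.X * PowerSeries.C (A i j)) *
      (Matrix.of fun i j => PowerSeries.mk fun n => (A ^ n) i j) = 1 := by
  set B : Matrix (Fin (k+1)) (Fin (k+1)) (PowerSeries K) :=
    Matrix.of fun i j => PowerSeries.mk fun n => (A ^ n) i j with hB
  set M : Matrix (Fin (k+1)) (Fin (k+1)) (PowerSeries K) :=
    (1 : Matrix (Fin (k+1)) (Fin (k+1)) (PowerSeries K)) -
      Matrix.of (fun i j => PowerSeries.X * PowerSeries.C (A i j)) with hM
  ext i j n
  rw [Matrix.mul_apply]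
  have hterm : ∀ l, M i l * B l j
      = (if i = l then B l j else 0) - PowerSeries.X * PowerSeries.C (A i l) * B l j := by
    intro l
    rw [hM, Matrix.sub_apply, Matrix.one_apply, sub_mul, ite_mul, one_mul, zero_mul]
    rfl
  simp only [hterm]
  rw [Finset.sum_sub_distrib, Finset.sum_ite_eq, map_sub, map_sum]
  simp only [Finset.mem_univ, if_true]
  have hBc : ∀ (l j : Fin (k+1)) (m : ℕ), (PowerSeries.coeff m) (B l j) = (A ^ m) l j := by
    intro l j m; simp [hB]
  cases n with
  | zero =>
    have h2 : ∀ l, (PowerSeries.coeff 0) (PowerSeries.X * PowerSeries.C (A i l) * B l j) = 0 := by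
      intro l; rw [mul_assoc]; simp
    simp only [h2, Finset.sum_const_zero, sub_zero, hBc, pow_zero]
    rw [Matrix.one_apply, Matrix.one_apply]
    split
    · simp
    · simp
  | succ n =>
    have h2 : ∀ l, (PowerSeries.coeff (n+1)) (PowerSeries.X * PowerSeries.C (A i l) * B l j)
        = A i l * (A ^ n) l j := by
      intro l
      rw [mul_assoc, PowerSeries.coeff_succ_X_mul, PowerSeries.coeff_C_mul, hBc]
    simp only [h2, hBc]
    rw [Matrix.one_apply]
    have hps : (A ^ (n+1)) i j = ∑ l, A i l * (A ^ n) l j := by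
      rw [pow_succ', Matrix.mul_apply]
    split
    · simp [hps]
    · simp [hps]

end Alg

/-- The generating function of excursions of height at most `k` is `F_k / F_{k+1}`
where `F_{k+1} = det(1 - t A⁽ᵏ⁾)` and `F₀ = 1`. -/
theorem bdd_excursion_det {K : Type*} [Field K] (S : Finset ℤ) (ω : ℤ → K)
    (a : ℤ) (haS : a ∈ S) (hmax : ∀ s ∈ S, s ≤ a) (k : ℕ) :
    bddExcursionGFW S ω k * Fdet S ω (k + 1) = Fdet S ω k := by
  set A : Matrix (Fin (k+1)) (Fin (k+1)) K := transferMatrix S ω k with hA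
  set M : Matrix (Fin (k+1)) (Fin (k+1)) (PowerSeries K) :=
    (1 : Matrix (Fin (k+1)) (Fin (k+1)) (PowerSeries K)) -
      Matrix.of (fun i j => PowerSeries.X * PowerSeries.C (A i j)) with hM
  set B : Matrix (Fin (k+1)) (Fin (k+1)) (PowerSeries K) :=
    Matrix.of fun i j => PowerSeries.mk fun n => (A ^ n) i j with hB
  have hF1 : Fdet S ω (k + 1) = M.det := rfl
  have hadj : M.adjugate = M.det • B := by
    calc M.adjugate = M.adjugate * (M * B) := by rw [geom_inverse, mul_one]
    _ = (M.adjugate * M) * B := (mul_assoc _ _ _).symm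
    _ = (M.det • 1) * B := by rw [Matrix.adjugate_mul]
    _ = M.det • B := by rw [Matrix.smul_mul, one_mul]
  have hE : bddExcursionGFW S ω k = B 0 0 := by
    apply PowerSeries.ext
    intro n
    rw [bddExcursionGFW, PowerSeries.coeff_mk, hB]
    show _ = (PowerSeries.coeff n) (PowerSeries.mk fun n => (A ^ n) (0 : Fin (k+1)) 0)
    rw [PowerSeries.coeff_mk, walk_count]
    congr 1
    rw [bddWalkSet, Finset.filter_filter]
    apply Finset.filter_congr
    intro f _
    simp
  have hsub : M.adjugate 0 0 = (M.submatrix Fin.succ Fin.succ).det := by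
    rw [Matrix.adjugate_fin_succ_eq_det_submatrix]
    simp [Fin.succAbove_zero]
  calc bddExcursionGFW S ω k * Fdet S ω (k + 1) = M.det * B 0 0 := by
        rw [hF1, hE]; ring
  _ = (M.det • B) 0 0 := by rw [Matrix.smul_apply, smul_eq_mul]
  _ = M.adjugate 0 0 := by rw [hadj]
  _ = (M.submatrix Fin.succ Fin.succ).det := hsub
  _ = Fdet S ω k := by
      cases k with
      | zero => simp [Fdet, Matrix.det_fin_zero]
      | succ m =>
        rw [Fdet]
        congr 1
        ext i j n
        have harg : ((Fin.succ j : Fin (m+2)) : ℤ) - ((Fin.succ i : Fin (m+2)) : ℤ)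
            = ((j : Fin (m+1)) : ℤ) - ((i : Fin (m+1)) : ℤ) := by
          simp [Fin.val_succ]
        have hAe : A (Fin.succ i) (Fin.succ j) = transferMatrix S ω m i j := by
          rw [hA]
          show transferMatrix S ω (m+1) (Fin.succ i) (Fin.succ j) = transferMatrix S ω m i j
          rw [transferMatrix, transferMatrix, Matrix.of_apply, Matrix.of_apply, harg]
        simp only [Matrix.submatrix_apply, hM, Matrix.sub_apply, Matrix.one_apply,
          Matrix.of_apply, hAe, Fin.succ_inj]
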